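/- Let x1,…,xn > 0, let ξ1,…,ξn be independent with ξi exponential of rate xi, and let π be the random permutation such that ξ_{π1} < ξ_{π2} < … < ξ_{πn} a.s. Then for any fixed permutation τ, P(π = τ) = ∏_{i=1}^{n-1} x_{τi} / (∑_{j=i}^{n} x_{τj}). -/

import Mathlib

open MeasureTheory ProbabilityTheory Real Finset


lemma SB_integral_exp {r : ℝ} (hr : 0 < r) (c : ℝ) :
    ∫ t in Set.Ioi c, Real.exp (-(r * t)) = Real.exp (-(r * c)) / r := by
  have hder : ∀ x ∈ Set.Ici c, HasDerivAt (fun t => -Real.exp (-(r * t)) / r)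
      (Real.exp (-(r * x))) x := by
    intro x _
    have h := (ProbabilityTheory.hasDerivAt_neg_exp_mul_exp (r := r) (x := x)).div_const r
    simpa [mul_div_assoc, mul_div_cancel_left₀ _ hr.ne'] using h
  have hint : IntegrableOn (fun t => Real.exp (-(r * t))) (Set.Ioi c) := by
    simpa [neg_mul] using exp_neg_integrableOn_Ioi c hr
  have htend : Filter.Tendsto (fun t => -Real.exp (-(r * t)) / r) Filter.atTop (nhds 0) := by
    have h1 : Filter.Tendsto (fun t : ℝ => r * t) Filter.atTop Filter.atTop :=
      Filter.Tendsto.const_mul_atTop hr Filter.tendsto_id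
    have h2 : Filter.Tendsto (fun t : ℝ => Real.exp (-(r * t))) Filter.atTop (nhds 0) :=
      Real.tendsto_exp_atBot.comp (Filter.tendsto_neg_atBot_iff.mpr h1)
    simpa using (h2.neg.div_const r)
  have := integral_Ioi_of_hasDerivAt_of_tendsto' hder hint htend
  rw [this]; ring

lemma SB_expMeasure_eq (r : ℝ) : expMeasure r = volume.withDensity (exponentialPDF r) := rfl

lemma SB_expMeasure_Iic (r : ℝ) : expMeasure r (Set.Iic 0) = 0 := by
  rw [SB_expMeasure_eq, withDensity_apply _ measurableSet_Iic,
    setLIntegral_congr (Iio_ae_eq_Iic (a := (0:ℝ))).symm]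
  exact lintegral_exponentialPDF_of_nonpos le_rfl

lemma SB_lintegral (r s : ℝ) (hr : 0 < r) (hs : 0 ≤ s) (c : ℝ) (hc : 0 ≤ c) :
    ∫⁻ t in Set.Ioi c, ENNReal.ofReal (Real.exp (-(s * t))) ∂(expMeasure r)
      = ENNReal.ofReal (r / (r + s) * Real.exp (-((r + s) * c))) := by
  have hrs : 0 < r + s := by linarith
  rw [SB_expMeasure_eq, restrict_withDensity measurableSet_Ioi,
    lintegral_withDensity_eq_lintegral_mul _
      (show Measurable (exponentialPDF r) from (measurable_exponentialPDFReal r).ennreal_ofReal)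
      (by fun_prop)]
  have hcong : ∀ t ∈ Set.Ioi c,
      exponentialPDF r t * ENNReal.ofReal (Real.exp (-(s * t)))
        = ENNReal.ofReal (r * Real.exp (-((r + s) * t))) := by
    intro t ht
    rw [exponentialPDF_of_nonneg (le_trans hc (le_of_lt ht)),
      ← ENNReal.ofReal_mul (by positivity)]
    congr 1
    rw [mul_assoc, ← Real.exp_add]
    ring_nf
  simp only [Pi.mul_apply]
  rw [setLIntegral_congr_fun_ae measurableSet_Ioi (Filter.Eventually.of_forall hcong)]
  rw [← ofReal_integral_eq_lintegral_ofReal]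
  · rw [integral_const_mul, SB_integral_exp hrs c]
    congr 1; ring
  · have : IntegrableOn (fun t => Real.exp (-((r+s) * t))) (Set.Ioi c) := by
      have h := exp_neg_integrableOn_Ioi c hrs
      convert h using 2 with t
      ring_nf
    exact this.const_mul r
  · exact Filter.Eventually.of_forall fun t => by positivity


lemma SB_key : ∀ (n : ℕ) (a : Fin n → ℝ), (∀ i, 0 < a i) → ∀ c : ℝ, 0 ≤ c →
    Measure.pi (fun i => expMeasure (a i))
      {y : Fin n → ℝ | (∀ i j : Fin n, i < j → y i < y j) ∧ ∀ i, c < y i}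
    = ENNReal.ofReal (Real.exp (-((∑ i, a i) * c))) *
        ∏ i : Fin n, ENNReal.ofReal (a i / ∑ j ∈ Finset.univ.filter (fun j => i ≤ j), a j) := by
  intro n
  induction n with
  | zero =>
    intro a ha c hc
    haveI : ∀ i : Fin 0, SigmaFinite (expMeasure (a i)) := fun i => i.elim0
    have hset : {y : Fin 0 → ℝ | (∀ i j : Fin 0, i < j → y i < y j) ∧ ∀ i, c < y i}
        = Set.univ := Set.eq_univ_iff_forall.mpr fun y => ⟨fun i => i.elim0, fun i => i.elim0⟩
    rw [hset, Measure.pi_univ]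
    simp
  | succ n IH =>
    intro a ha c hc
    haveI hPM : ∀ i : Fin (n+1), IsProbabilityMeasure (expMeasure (a i)) :=
      fun i => isProbabilityMeasure_expMeasure (ha i)
    haveI : ∀ i : Fin (n+1), SigmaFinite (expMeasure (a i)) := fun i => inferInstance
    set s := ∑ k : Fin n, a k.succ with hs_def
    have hs0 : 0 ≤ s := Finset.sum_nonneg fun k _ => (ha _).le
    set ν := Measure.pi (fun k : Fin n => expMeasure (a k.succ)) with hν
    set C := ∏ k : Fin n, ENNReal.ofReal
      (a k.succ / ∑ l ∈ Finset.univ.filter (fun l => k ≤ l), a l.succ) with hC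
    set B : Set (ℝ × (Fin n → ℝ)) :=
      {p | c < p.1 ∧ (∀ k, p.1 < p.2 k) ∧ ∀ k l : Fin n, k < l → p.2 k < p.2 l} with hB_def
    have hB : MeasurableSet B := by
      have hBeq : B = {p : ℝ × (Fin n → ℝ) | c < p.1} ∩
          ((⋂ k, {p : ℝ × (Fin n → ℝ) | p.1 < p.2 k}) ∩
           ⋂ (k) (l) (_ : k < l), {p : ℝ × (Fin n → ℝ) | p.2 k < p.2 l}) := by
        ext p
        simp [hB_def, Set.mem_iInter]
      rw [hBeq]
      refine (measurableSet_lt measurable_const measurable_fst).inter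
        ((MeasurableSet.iInter fun k => measurableSet_lt measurable_fst
            (by fun_prop)).inter
         (MeasurableSet.iInter fun k => MeasurableSet.iInter fun l =>
          MeasurableSet.iInter fun _ =>
           measurableSet_lt (by fun_prop) (by fun_prop)))
    have hMP := measurePreserving_piFinSuccAbove (fun i : Fin (n+1) => expMeasure (a i)) 0
    simp_rw [Fin.zero_succAbove] at hMP
    have hpre : (MeasurableEquiv.piFinSuccAbove (fun _ : Fin (n+1) => ℝ) 0) ⁻¹' B
        = {y : Fin (n+1) → ℝ | (∀ i j, i < j → y i < y j) ∧ ∀ i, c < y i} := by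
      ext y
      simp only [MeasurableEquiv.piFinSuccAbove, MeasurableEquiv.coe_mk,
        Set.mem_preimage, Set.mem_setOf_eq, hB_def, Fin.insertNthEquiv,
        Equiv.coe_fn_symm_mk, Fin.removeNth, Fin.zero_succAbove]
      constructor
      · rintro ⟨h1, h2, h3⟩
        constructor
        · intro i j hij
          induction i using Fin.cases with
          | zero =>
            induction j using Fin.cases with
            | zero => exact absurd hij (lt_irrefl _)
            | succ l => exact h2 l
          | succ k =>
            induction j using Fin.cases with
            | zero => exact absurd hij (Fin.not_lt_zero _)
            | succ l => exact h3 k l (by simpa [Fin.succ_lt_succ_iff] using hij)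
        · intro i
          induction i using Fin.cases with
          | zero => exact h1
          | succ k => exact h1.trans (h2 k)
      · rintro ⟨hmono, hpos⟩
        exact ⟨hpos 0, fun k => hmono 0 k.succ (Fin.succ_pos k),
          fun k l hkl => hmono k.succ l.succ (Fin.succ_lt_succ_iff.mpr hkl)⟩
    have h1 : Measure.pi (fun i : Fin (n+1) => expMeasure (a i))
        {y : Fin (n+1) → ℝ | (∀ i j, i < j → y i < y j) ∧ ∀ i, c < y i}
        = ((expMeasure (a 0)).prod ν) B := by
      rw [← hpre, ← Measure.map_apply
        (MeasurableEquiv.piFinSuccAbove (fun _ : Fin (n+1) => ℝ) 0).measurable hB, hMP.map_eq]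
    rw [h1, Measure.prod_apply hB]
    have hslice : ∀ t : ℝ, ν (Prod.mk t ⁻¹' B)
        = Set.indicator (Set.Ioi c)
            (fun t => ENNReal.ofReal (Real.exp (-(s * t))) * C) t := by
      intro t
      by_cases ht : t ∈ Set.Ioi c
      · rw [Set.indicator_of_mem ht]
        have hpre2 : Prod.mk t ⁻¹' B
            = {z : Fin n → ℝ | (∀ k l : Fin n, k < l → z k < z l) ∧ ∀ k, t < z k} := by
          ext z
          simp only [Set.mem_preimage, hB_def, Set.mem_setOf_eq, ht]
          tauto
        rw [hpre2, hν, IH (fun k => a k.succ) (fun k => ha _) t (hc.trans (le_of_lt ht))]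
      · rw [Set.indicator_of_notMem ht]
        have : Prod.mk t ⁻¹' B = ∅ := by
          ext z
          simp only [Set.mem_preimage, hB_def, Set.mem_setOf_eq, Set.mem_empty_iff_false,
            iff_false, not_and]
          intro hct
          exact absurd hct ht
        simp [this]
    rw [lintegral_congr hslice, lintegral_indicator measurableSet_Ioi,
      lintegral_mul_const _ (by fun_prop), SB_lintegral (a 0) s (ha 0) hs0 c hc]
    -- arithmetic
    have hsum : ∑ i : Fin (n+1), a i = a 0 + s := Fin.sum_univ_succ a
    have h0 : ∑ j ∈ Finset.univ.filter (fun j => (0 : Fin (n+1)) ≤ j), a j = a 0 + s := by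
      rw [Finset.filter_true_of_mem (fun j _ => Fin.zero_le j), hsum]
    have hsucc : ∀ k : Fin n, ∑ j ∈ Finset.univ.filter (fun j => k.succ ≤ j), a j
        = ∑ l ∈ Finset.univ.filter (fun l => k ≤ l), a l.succ := by
      intro k
      rw [Finset.sum_filter, Finset.sum_filter, Fin.sum_univ_succ]
      simp [Fin.le_zero_iff, Fin.succ_ne_zero, Fin.succ_le_succ_iff]
    rw [Fin.prod_univ_succ, h0]
    simp_rw [hsucc]
    rw [hsum, ← hC, ENNReal.ofReal_mul (div_nonneg (ha 0).le (add_nonneg (ha 0).le hs0))]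
    ring

/-- Size-biased ordering formula: for independent exponentials `ξ i ~ Exp (x i)`,
the probability that the increasing ordering of the `ξ`s is given by the
permutation `τ` equals `∏_{i=1}^{n-1} x (τ i) / ∑_{j=i}^{n} x (τ j)`. -/

theorem stmt2 {Ω : Type*} [MeasurableSpace Ω] (P : Measure Ω) [IsProbabilityMeasure P]
    (n : ℕ) (x : Fin n → ℝ) (hx : ∀ i, 0 < x i)
    (ξ : Fin n → Ω → ℝ) (hm : ∀ i, Measurable (ξ i))
    (hl : ∀ i, Measure.map (ξ i) P = expMeasure (x i))
    (hindep : iIndepFun ξ P)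
    (τ : Equiv.Perm (Fin n)) :
    P {ω | ∀ i j : Fin n, i < j → ξ (τ i) ω < ξ (τ j) ω} =
      ENNReal.ofReal
        (∏ i ∈ Finset.univ.filter (fun i : Fin n => (i : ℕ) + 1 < n),
          x (τ i) / ∑ j ∈ Finset.univ.filter (fun j : Fin n => i ≤ j), x (τ j)) := by
  haveI hPM : ∀ i, IsProbabilityMeasure (expMeasure (x i)) :=
    fun i => isProbabilityMeasure_expMeasure (hx i)
  haveI : ∀ i, SigmaFinite (expMeasure (x i)) := fun i => inferInstance
  set a : Fin n → ℝ := fun i => x (τ i) with ha_def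
  have ha : ∀ i, 0 < a i := fun i => hx _
  haveI : ∀ i, SigmaFinite (expMeasure (a i)) := fun i => inferInstance
  set f : Ω → (Fin n → ℝ) := fun ω i => ξ i ω with hf_def
  have hf : Measurable f := measurable_pi_lambda _ fun i => hm i
  have hmap : P.map f = Measure.pi (fun i => expMeasure (x i)) := by
    refine (Measure.pi_eq fun s hs => ?_).symm
    rw [Measure.map_apply hf (MeasurableSet.univ_pi hs)]
    have hpre : f ⁻¹' Set.pi Set.univ s = ⋂ i ∈ Finset.univ, ξ i ⁻¹' s i := by
      ext ω; simp [hf_def, Set.mem_pi]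
    rw [hpre, hindep.measure_inter_preimage_eq_mul Finset.univ (fun i _ => hs i)]
    exact Finset.prod_congr rfl fun i _ => by rw [← hl i, Measure.map_apply (hm i) (hs i)]
  set A : Set (Fin n → ℝ) := {y | ∀ i j : Fin n, i < j → y (τ i) < y (τ j)} with hA_def
  have hA : MeasurableSet A := by
    have : A = ⋂ (i) (j) (_ : i < j), {y : Fin n → ℝ | y (τ i) < y (τ j)} := by
      ext y; simp [hA_def]
    rw [this]
    exact MeasurableSet.iInter fun i => MeasurableSet.iInter fun j => MeasurableSet.iInter
      fun _ => measurableSet_lt (measurable_pi_apply _) (measurable_pi_apply _)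
  have hP : P {ω | ∀ i j : Fin n, i < j → ξ (τ i) ω < ξ (τ j) ω} = (P.map f) A := by
    rw [Measure.map_apply hf hA]; rfl
  -- permutation
  have hperm := measurePreserving_piCongrLeft (fun i : Fin n => expMeasure (x i))
    (τ : Fin n ≃ Fin n)
  have hpre2 : (MeasurableEquiv.piCongrLeft (fun _ : Fin n => ℝ) (τ : Fin n ≃ Fin n)) ⁻¹' A
      = {z : Fin n → ℝ | ∀ i j : Fin n, i < j → z i < z j} := by
    ext z
    have happ : ∀ i, (MeasurableEquiv.piCongrLeft (fun _ : Fin n => ℝ)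
        (τ : Fin n ≃ Fin n)) z (τ i) = z i := fun i =>
      Equiv.piCongrLeft_apply_apply (fun _ : Fin n => ℝ) (τ : Fin n ≃ Fin n) z i
    simp only [Set.mem_preimage, hA_def, Set.mem_setOf_eq, happ]
  have h2 : (Measure.pi fun i : Fin n => expMeasure (x i)) A
      = (Measure.pi fun i : Fin n => expMeasure (a i))
          {z : Fin n → ℝ | ∀ i j : Fin n, i < j → z i < z j} := by
    rw [← hperm.map_eq, Measure.map_apply
      (MeasurableEquiv.piCongrLeft (fun _ : Fin n => ℝ) (τ : Fin n ≃ Fin n)).measurable hA, hpre2]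
  -- add positivity a.e.
  have hnull : ∀ i : Fin n, (Measure.pi fun i => expMeasure (a i)) {z : Fin n → ℝ | z i ≤ 0} = 0 := by
    intro i
    have hset : {z : Fin n → ℝ | z i ≤ 0}
        = Set.pi Set.univ (fun j => if j = i then Set.Iic (0:ℝ) else Set.univ) := by
      ext z
      constructor
      · intro hz j _
        by_cases hj : j = i
        · subst hj; simpa using hz
        · simp [hj]
      · intro hz
        have := hz i (Set.mem_univ i)
        simpa using this
    rw [hset, Measure.pi_pi]
    refine Finset.prod_eq_zero (Finset.mem_univ i) ?_
    simp [SB_expMeasure_Iic]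
  have hae : {z : Fin n → ℝ | ∀ i j : Fin n, i < j → z i < z j}
      =ᵐ[Measure.pi fun i : Fin n => expMeasure (a i)]
      {z : Fin n → ℝ | (∀ i j : Fin n, i < j → z i < z j) ∧ ∀ i, (0:ℝ) < z i} := by
    rw [MeasureTheory.ae_eq_set]
    constructor
    · refine measure_mono_null ?_ (measure_iUnion_null hnull)
      intro z hz
      simp only [Set.mem_diff, Set.mem_setOf_eq, not_and, not_forall] at hz
      obtain ⟨i, hi⟩ := hz.2 hz.1
      exact Set.mem_iUnion.mpr ⟨i, not_lt.mp hi⟩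
    · refine measure_mono_null ?_ (measure_empty (μ := Measure.pi fun i : Fin n => expMeasure (a i)))
      intro z hz
      exact absurd hz.1.1 (fun h => hz.2 h)
  rw [hP, hmap, h2, measure_congr hae, SB_key n a ha 0 le_rfl]
  simp only [mul_zero, neg_zero, Real.exp_zero, ENNReal.ofReal_one, one_mul]
  -- final arithmetic
  rw [ENNReal.ofReal_prod_of_nonneg
    (fun i _ => div_nonneg (hx _).le (Finset.sum_nonneg fun j _ => (hx _).le))]
  refine (Finset.prod_subset (Finset.filter_subset _ _) ?_).symm
  intro i _ hi
  simp only [Finset.mem_filter, Finset.mem_univ, true_and, not_lt] at hi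
  have hsingle : Finset.univ.filter (fun j : Fin n => i ≤ j) = {i} := by
    ext j
    simp only [Finset.mem_filter, Finset.mem_univ, true_and, Finset.mem_singleton]
    constructor
    · intro hij
      exact le_antisymm (Fin.le_def.mpr (Nat.lt_succ_iff.mp (lt_of_lt_of_le j.isLt hi))) hij
    · rintro rfl; exact le_refl _
  rw [hsingle, Finset.sum_singleton, div_self (hx _).ne', ENNReal.ofReal_one]
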